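/- Let I be a stable monomial ideal in the skew polynomial ring R. The product defined on the skew Eliahou–Kervaire resolution L_•(I) is associative: (e(σ;u) e(τ;v)) e(ρ;w) = e(σ;u) (e(τ;v) e(ρ;w)) for all admissible symbols e(σ;u), e(τ;v), e(ρ;w). -/

import Mathlib

open Finsupp

/-- Exponent vectors of monomials in `n` variables. -/
abbrev NExp (n : ℕ) := Fin n →₀ ℕ

/-- Integer exponent vectors (for Laurent-type arguments of the bicharacter `C`). -/
abbrev ZExp (n : ℕ) := Fin n →₀ ℤ

/-- Canonical inclusion of `ℕ`-exponent vectors into `ℤ`-exponent vectors. -/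
noncomputable def zc {n : ℕ} (a : NExp n) : ZExp n := Finsupp.mapRange (fun (m : ℕ) => (m : ℤ)) (by simp) a

/-- Total degree of a monomial. -/
def wdeg {n : ℕ} (a : NExp n) : ℕ := a.sum fun _ e => e

/-- `maxIdx a` is the 1-based index of the largest variable occurring in `x^a`
(`0` if `a = 0`, i.e. for the monomial `1`). -/
def maxIdx {n : ℕ} (a : NExp n) : ℕ := a.support.sup fun i => (i : ℕ) + 1

/-- `max(u) ≤ min(y)`: every variable occurring in `y` has (1-based) index at least
`maxIdx u`.  (This is vacuously true when `y = 0`, matching `min(1) = +∞`.) -/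
def maxLeMin {n : ℕ} (u y : NExp n) : Prop := ∀ j ∈ y.support, maxIdx u ≤ (j : ℕ) + 1

/-- Data exhibiting the ring `R` as the skew polynomial ring `k_q[x_1,…,x_n]`:
the monomials `x^a` form a `k`-basis, multiply according to the alternating
bicharacter `C`, and `C` is induced by the defining constants `q i j` with
`x_i x_j = q i j • (x_j x_i)`. -/
structure SkewPoly (k R : Type*) [CommRing k] [Ring R] [Algebra k R] (n : ℕ) : Type _ where
  /-- the monomial `x^a` -/
  mon : NExp n → R
  /-- the bicharacter `C`, defined by `x^a x^b = C(x^a,x^b) x^{a+b}` -/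
  C : ZExp n → ZExp n → kˣ
  /-- the defining constants `q_{i,j}` -/
  q : Fin n → Fin n → kˣ
  q_diag : ∀ i, q i i = 1
  q_symm : ∀ i j, q j i = (q i j)⁻¹
  /-- the monomials form a `k`-basis of `R` -/
  basis : Module.Basis (NExp n) k R
  basis_eq : ∀ a, basis a = mon a
  mon_zero : mon 0 = 1
  mon_mul : ∀ a b, mon a * mon b = ((C (zc a) (zc b) : kˣ) : k) • mon (a + b)
  C_add_left : ∀ a b c, C (a + b) c = C a c * C b c
  C_add_right : ∀ a b c, C a (b + c) = C a b * C a c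
  C_single : ∀ i j : Fin n,
    C (Finsupp.single i 1) (Finsupp.single j 1) = if j < i then q i j else 1

namespace SkewPoly

variable {k R : Type*} [CommRing k] [Ring R] [Algebra k R] {n : ℕ}

/-- The bicharacter `χ(a,b) = C(a,b)/C(b,a)`, so that `x^a x^b = χ(x^a,x^b) x^b x^a`. -/
def chi (S : SkewPoly k R n) (a b : ZExp n) : kˣ := S.C a b * (S.C b a)⁻¹

/-- The set of exponent vectors of the monomials lying in the right ideal `I`. -/
def monSet (S : SkewPoly k R n) (I : Submodule Rᵐᵒᵖ R) : Set (NExp n) :=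
  {w | S.mon w ∈ I}

/-- `I` is a monomial (right) ideal: it is generated by a set of monomials. -/
def IsMonomialIdeal (S : SkewPoly k R n) (I : Submodule Rᵐᵒᵖ R) : Prop :=
  ∃ T : Set (NExp n), I = Submodule.span Rᵐᵒᵖ (S.mon '' T)

/-- `I` is stable: for every monomial `w ∈ I` and every index `i < max(w)`,
the monomial `(x_i * w)/x_{max(w)}` lies in `I`. -/
def IsStable (S : SkewPoly k R n) (I : Submodule Rᵐᵒᵖ R) : Prop :=
  ∀ w ∈ S.monSet I, ∀ i m : Fin n, (m : ℕ) + 1 = maxIdx w → i < m →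
    w + Finsupp.single i 1 - Finsupp.single m 1 ∈ S.monSet I

/-- The canonical (minimal) monomial generating set `G(I)`: monomials of `I` that are
not proper multiples of other monomials of `I`. -/
def G (S : SkewPoly k R n) (I : Submodule Rᵐᵒᵖ R) : Set (NExp n) :=
  {u | u ∈ S.monSet I ∧ ∀ v ∈ S.monSet I, v ≤ u → v = u}

/-- `g` is the decomposition function of the stable ideal `I`: it sends a monomial
`w ∈ I` to the generator `u ∈ G(I)` of its canonical decomposition `w = u * y`,
`max(u) ≤ min(y)`. -/
def IsDecompFun (S : SkewPoly k R n) (I : Submodule Rᵐᵒᵖ R)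
    (g : NExp n → NExp n) : Prop :=
  ∀ w ∈ S.monSet I, g w ∈ S.G I ∧ g w ≤ w ∧ maxLeMin (g w) (w - g w)

end SkewPoly

section Complex

open Finsupp

/-- Symbols `e(i_1,…,i_q; u)`: a list of variable indices together with a monomial. -/
abbrev EKSym (n : ℕ) := List (Fin n) × NExp n

/-- The exponent vector of `x_σ = x_{i_1} ⋯ x_{i_q}`. -/
noncomputable def listMon {n : ℕ} (σ : List (Fin n)) : NExp n :=
  (σ.map fun i => Finsupp.single i 1).sum

variable {k R : Type*} [CommRing k] [Ring R] [Algebra k R] {n : ℕ}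

/-- Right action of `R` on the free right `R`-module `EKSym n →₀ R`. -/
noncomputable def rmul (f : EKSym n →₀ R) (r : R) : EKSym n →₀ R :=
  f.mapRange (· * r) (zero_mul r)

/-- A symbol `e(i_1,…,i_q;u)` is admissible for `I` when `u ∈ G(I)` and
`1 ≤ i_1 < ⋯ < i_q < max(u)`. -/
def Adm (S : SkewPoly k R n) (I : Submodule Rᵐᵒᵖ R) (s : EKSym n) : Prop :=
  s.1.Pairwise (· < ·) ∧ s.2 ∈ S.G I ∧ ∀ i ∈ s.1, (i : ℕ) + 1 < maxIdx s.2

/-- The value of the differential `D` of the big complex `K_•(I)` on the symbol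
`e(σ;u)`:
`D e(σ;u) = Σ_r (−1)^r e(σ_r;u) C(x_{σ_r}*u, x_{i_r})⁻¹ x_{i_r}
          − Σ_r (−1)^r e(σ_r;u_r) C(x_{σ_r}, y_r)⁻¹ y_r`,
where `u_r = g(x_{i_r} * u)` and `y_r = (x_{i_r} * u)/u_r`. -/
noncomputable def Dsym (S : SkewPoly k R n) (g : NExp n → NExp n) (s : EKSym n) :
    EKSym n →₀ R :=
  ∑ r : Fin s.1.length,
    ((-1 : k) ^ ((r : ℕ) + 1)) •
      (Finsupp.single (s.1.eraseIdx (r : ℕ), s.2)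
          ((((S.C (zc (listMon (s.1.eraseIdx (r : ℕ)) + s.2))
              (Finsupp.single (s.1.get r) (1 : ℤ)))⁻¹ : kˣ) : k) •
            S.mon (Finsupp.single (s.1.get r) 1))
       - Finsupp.single (s.1.eraseIdx (r : ℕ), g (Finsupp.single (s.1.get r) 1 + s.2))
          ((((S.C (zc (listMon (s.1.eraseIdx (r : ℕ))))
              (zc (Finsupp.single (s.1.get r) 1 + s.2
                    - g (Finsupp.single (s.1.get r) 1 + s.2))))⁻¹ : kˣ) : k) •
            S.mon (Finsupp.single (s.1.get r) 1 + s.2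
                    - g (Finsupp.single (s.1.get r) 1 + s.2))))

/-- The differential `D : K_•(I) → K_•(I)` extended right-`R`-linearly. -/
noncomputable def Dfun (S : SkewPoly k R n) (g : NExp n → NExp n)
    (f : EKSym n →₀ R) : EKSym n →₀ R :=
  f.sum fun s r => rmul (Dsym S g s) r

open scoped Classical in
/-- The value of the Eliahou–Kervaire differential `d` of `L_•(I)` on `e(σ;u)`:
as for `D`, but the second sum is restricted to `A(σ;u)`, i.e. to those `r` for
which `e(σ_r;u_r)` is admissible. -/
noncomputable def dsym (S : SkewPoly k R n) (I : Submodule Rᵐᵒᵖ R)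
    (g : NExp n → NExp n) (s : EKSym n) : EKSym n →₀ R :=
  ∑ r : Fin s.1.length,
    ((-1 : k) ^ ((r : ℕ) + 1)) •
      (Finsupp.single (s.1.eraseIdx (r : ℕ), s.2)
          ((((S.C (zc (listMon (s.1.eraseIdx (r : ℕ)) + s.2))
              (Finsupp.single (s.1.get r) (1 : ℤ)))⁻¹ : kˣ) : k) •
            S.mon (Finsupp.single (s.1.get r) 1))
       - if Adm S I (s.1.eraseIdx (r : ℕ), g (Finsupp.single (s.1.get r) 1 + s.2)) then
          Finsupp.single (s.1.eraseIdx (r : ℕ), g (Finsupp.single (s.1.get r) 1 + s.2))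
          ((((S.C (zc (listMon (s.1.eraseIdx (r : ℕ))))
              (zc (Finsupp.single (s.1.get r) 1 + s.2
                    - g (Finsupp.single (s.1.get r) 1 + s.2))))⁻¹ : kˣ) : k) •
            S.mon (Finsupp.single (s.1.get r) 1 + s.2
                    - g (Finsupp.single (s.1.get r) 1 + s.2)))
         else 0)

/-- The Eliahou–Kervaire differential `d : L_•(I) → L_•(I)` extended
right-`R`-linearly. -/
noncomputable def dfun (S : SkewPoly k R n) (I : Submodule Rᵐᵒᵖ R)
    (g : NExp n → NExp n) (f : EKSym n →₀ R) : EKSym n →₀ R :=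
  f.sum fun s r => rmul (dsym S I g s) r

open scoped Classical in
/-- The augmentation `ε : L_0(I) → R`, `e(∅;u) ↦ u`. -/
noncomputable def epsfun (S : SkewPoly k R n) (f : EKSym n →₀ R) : R :=
  f.sum fun s r => if s.1 = [] then S.mon s.2 * r else 0

/-- Membership in the subcomplex `J`: the last index satisfies `i_q ≥ max(u)`. -/
def JSym {n : ℕ} (s : EKSym n) : Prop :=
  ∃ m : Fin n, s.1.getLast? = some m ∧ maxIdx s.2 ≤ (m : ℕ) + 1

/-- Two integer exponent vectors have the same `G`-degree. -/
def GdegEq (S : SkewPoly k R n) (a b : ZExp n) : Prop := ∀ c, S.chi a c = S.chi b c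

end Complex

section DG

open Finsupp

variable {k R : Type*} [CommRing k] [Ring R] [Algebra k R] {n : ℕ}

/-- `inv(σ,τ) = #{(i,j) ∈ σ × τ | j < i}`. -/
def invCount {n : ℕ} (σ τ : List (Fin n)) : ℕ :=
  (σ.map fun i => (τ.filter fun j => decide (j < i)).length).sum

open scoped Classical in
/-- The product `e(σ;u) · e(τ;v)` on the skew Eliahou–Kervaire resolution:
`0` if `σ` and `τ` share an index, and otherwise
`(−1)^{inv(σ,τ)} e(σ*τ; g(u*v)) χ(u,x_τ) C(x_σ,x_τ) C(u,v) C(x_σ, g(u*v)/u)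
C(x_τ, g(u*v)/v) · (u*v)/g(u*v)`, where a symbol whose largest index is
`≥ max` of its monomial is interpreted as `0`. -/
noncomputable def psym (S : SkewPoly k R n) (I : Submodule Rᵐᵒᵖ R)
    (g : NExp n → NExp n) (s t : EKSym n) : EKSym n →₀ R :=
  if s.1.Disjoint t.1 ∧
      Adm S I (List.insertionSort (· ≤ ·) (s.1 ++ t.1), g (s.2 + t.2)) then
    (((-1 : k) ^ invCount s.1 t.1) *
      ((S.chi (zc s.2) (zc (listMon t.1)) : kˣ) : k) *
      ((S.C (zc (listMon s.1)) (zc (listMon t.1)) : kˣ) : k) *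
      ((S.C (zc s.2) (zc t.2) : kˣ) : k) *
      ((S.C (zc (listMon s.1)) (zc (g (s.2 + t.2)) - zc s.2) : kˣ) : k) *
      ((S.C (zc (listMon t.1)) (zc (g (s.2 + t.2)) - zc t.2) : kˣ) : k)) •
    Finsupp.single (List.insertionSort (· ≤ ·) (s.1 ++ t.1), g (s.2 + t.2))
      (S.mon (s.2 + t.2 - g (s.2 + t.2)))
  else 0

/-- The product on `L_•(I)` extended to arbitrary elements: coefficients are moved
past basis symbols using the bimodule rule `r · e = χ(r, e) e · r` (monomial by
monomial on the `G`-homogeneous components of the coefficient). -/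
noncomputable def lmul (S : SkewPoly k R n) (I : Submodule Rᵐᵒᵖ R)
    (g : NExp n → NExp n) (f h : EKSym n →₀ R) : EKSym n →₀ R :=
  f.sum fun s r => h.sum fun t r' =>
    rmul (psym S I g s t)
      (((S.basis.repr r).sum fun a c =>
        c • (((S.chi (zc a) (zc (listMon t.1) + zc t.2) : kˣ) : k) • S.mon a)) * r')

/-- `f` is bihomogeneous of homological degree `q` (and some internal degree):
all symbols in its support have length `q`, and all underlying monomials have the
same total internal degree. -/
def Bihom (S : SkewPoly k R n) (f : EKSym n →₀ R) (q : ℕ) : Prop :=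
  (∀ s ∈ f.support, s.1.length = q) ∧
  ∃ dZ : ℕ, ∀ s ∈ f.support, ∀ a ∈ (S.basis.repr (f s)).support,
    wdeg a + s.1.length + wdeg s.2 = dZ

/-- `f` is trihomogeneous of homological degree `q`: bihomogeneous and moreover
`G`-homogeneous. -/
def Trihom (S : SkewPoly k R n) (f : EKSym n →₀ R) (q : ℕ) : Prop :=
  Bihom S f q ∧
  ∃ c : ZExp n, ∀ s ∈ f.support, ∀ a ∈ (S.basis.repr (f s)).support,
    GdegEq S (zc a + zc (listMon s.1) + zc s.2) c

end DG

section Lemmas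

open Finsupp

-- zc and maxIdx basics
lemma zc_apply {n : ℕ} (a : NExp n) (i : Fin n) : zc a i = (a i : ℤ) := rfl
lemma zc_zero {n : ℕ} : zc (0 : NExp n) = 0 := by ext i; simp [zc_apply]
lemma zc_add {n : ℕ} (a b : NExp n) : zc (a + b) = zc a + zc b := by ext i; simp [zc_apply]
lemma zc_sub {n : ℕ} (a b : NExp n) (h : b ≤ a) : zc (a - b) = zc a - zc b := by
  ext i
  have := Finsupp.le_def.mp h i
  simp [zc_apply, Finsupp.tsub_apply]
  omega

lemma maxIdx_le_iff {n : ℕ} (a : NExp n) (m : ℕ) : maxIdx a ≤ m ↔ ∀ j, a j ≠ 0 → (j:ℕ)+1 ≤ m := by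
  simp [maxIdx, Finset.sup_le_iff, Finsupp.mem_support_iff]

lemma le_maxIdx {n : ℕ} {a : NExp n} {j : Fin n} (h : a j ≠ 0) : (j:ℕ)+1 ≤ maxIdx a := by
  unfold maxIdx
  exact Finset.le_sup (f := fun i : Fin n => (i:ℕ)+1) (Finsupp.mem_support_iff.mpr h)

lemma maxIdx_mono {n : ℕ} {a b : NExp n} (h : a ≤ b) : maxIdx a ≤ maxIdx b := by
  rw [maxIdx_le_iff]
  intro j hj
  exact le_maxIdx (fun h0 => hj (Nat.eq_zero_of_le_zero (h0 ▸ Finsupp.le_def.mp h j)))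

lemma maxIdx_add_le {n : ℕ} (a b : NExp n) : maxIdx (a + b) ≤ max (maxIdx a) (maxIdx b) := by
  rw [maxIdx_le_iff]
  intro j hj
  rcases Nat.eq_zero_or_pos (a j) with h | h
  · exact le_trans (le_maxIdx (by simpa [Finsupp.add_apply, h] using hj)) (le_max_right _ _)
  · exact le_trans (le_maxIdx (by omega)) (le_max_left _ _)

lemma maxIdx_single_le {n : ℕ} (i : Fin n) : maxIdx (Finsupp.single i 1) ≤ (i:ℕ)+1 := by
  rw [maxIdx_le_iff]
  intro j hj
  rcases eq_or_ne j i with rfl | hne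
  · omega
  · exact absurd (Finsupp.single_eq_of_ne hne) hj

lemma maxLeMin_zero {n : ℕ} (u : NExp n) : maxLeMin u 0 := by
  intro j hj; simp at hj

lemma maxLeMin_add {n : ℕ} {u a b : NExp n} (ha : maxLeMin u a) (hb : maxLeMin u b) :
    maxLeMin u (a + b) := by
  intro j hj
  rw [Finsupp.mem_support_iff, Finsupp.add_apply] at hj
  rcases Nat.eq_zero_or_pos (a j) with h | h
  · exact hb j (Finsupp.mem_support_iff.mpr (by omega))
  · exact ha j (Finsupp.mem_support_iff.mpr (by omega))

lemma maxLeMin_of_le {n : ℕ} {u u' y : NExp n} (h : maxIdx u' ≤ maxIdx u)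
    (hy : maxLeMin u y) : maxLeMin u' y := fun j hj => le_trans h (hy j hj)

namespace SkewPoly

variable {k R : Type*} [CommRing k] [Ring R] [Algebra k R] {n : ℕ}

-- C basics
lemma C_zero_left (S : SkewPoly k R n) (b : ZExp n) : S.C 0 b = 1 := by
  have h := S.C_add_left 0 0 b
  rw [add_zero] at h
  exact mul_eq_left.mp h.symm

lemma C_zero_right (S : SkewPoly k R n) (a : ZExp n) : S.C a 0 = 1 := by
  have h := S.C_add_right a 0 0
  rw [add_zero] at h
  exact mul_eq_left.mp h.symm

lemma C_neg_left (S : SkewPoly k R n) (a b : ZExp n) : S.C (-a) b = (S.C a b)⁻¹ := by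
  have h := S.C_add_left a (-a) b
  rw [add_neg_cancel, S.C_zero_left] at h
  exact (eq_inv_of_mul_eq_one_right (mul_comm (S.C a b) (S.C (-a) b) ▸ h.symm))

lemma C_neg_right (S : SkewPoly k R n) (a b : ZExp n) : S.C a (-b) = (S.C a b)⁻¹ := by
  have h := S.C_add_right a b (-b)
  rw [add_neg_cancel, S.C_zero_right] at h
  exact (eq_inv_of_mul_eq_one_right h.symm)

lemma C_sub_left (S : SkewPoly k R n) (a b c : ZExp n) :
    S.C (a - b) c = S.C a c * (S.C b c)⁻¹ := by
  rw [sub_eq_add_neg, S.C_add_left, S.C_neg_left]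

lemma C_sub_right (S : SkewPoly k R n) (a b c : ZExp n) :
    S.C a (b - c) = S.C a b * (S.C a c)⁻¹ := by
  rw [sub_eq_add_neg, S.C_add_right, S.C_neg_right]

lemma chi_zero_left (S : SkewPoly k R n) (b : ZExp n) : S.chi 0 b = 1 := by
  rw [chi, S.C_zero_left, S.C_zero_right]; simp

end SkewPoly

end Lemmas

namespace SkewPoly

variable {k R : Type*} [CommRing k] [Ring R] [Algebra k R] {n : ℕ}

lemma C_zsmul_left (S : SkewPoly k R n) (m : ℤ) (a b : ZExp n) :
    S.C (m • a) b = S.C a b ^ m := by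
  induction m using Int.induction_on with
  | zero => simp [S.C_zero_left]
  | succ i ih => rw [add_smul, one_smul, S.C_add_left, ih, zpow_add_one]
  | pred i ih => rw [sub_smul, one_smul, S.C_sub_left, ih, zpow_sub_one]

lemma C_zsmul_right (S : SkewPoly k R n) (m : ℤ) (a b : ZExp n) :
    S.C a (m • b) = S.C a b ^ m := by
  induction m using Int.induction_on with
  | zero => simp [S.C_zero_right]
  | succ i ih => rw [add_smul, one_smul, S.C_add_right, ih, zpow_add_one]
  | pred i ih => rw [sub_smul, one_smul, S.C_sub_right, ih, zpow_sub_one]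

lemma C_single_one (S : SkewPoly k R n) {i j : Fin n} (h : (i:ℕ) ≤ (j:ℕ)) :
    S.C (Finsupp.single i 1) (Finsupp.single j 1) = 1 := by
  rw [S.C_single, if_neg]
  intro hc
  exact absurd (Fin.lt_def.mp hc) (by omega)

lemma C_single_single (S : SkewPoly k R n) {i j : Fin n} (m m' : ℤ) (h : (i:ℕ) ≤ (j:ℕ)) :
    S.C (Finsupp.single i m) (Finsupp.single j m') = 1 := by
  have h1 : (Finsupp.single i m : ZExp n) = m • Finsupp.single i 1 := by
    rw [Finsupp.smul_single, smul_eq_mul, mul_one]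
  have h2 : (Finsupp.single j m' : ZExp n) = m' • Finsupp.single j 1 := by
    rw [Finsupp.smul_single, smul_eq_mul, mul_one]
  rw [h1, h2, S.C_zsmul_left, S.C_zsmul_right, S.C_single_one h, one_zpow, one_zpow]

lemma C_eq_one (S : SkewPoly k R n) (x y : ZExp n)
    (h : ∀ i ∈ x.support, ∀ j ∈ y.support, (i:ℕ) ≤ (j:ℕ)) : S.C x y = 1 := by
  induction x using Finsupp.induction with
  | zero => exact S.C_zero_left y
  | single_add i m f hi hm ihf =>
    rw [S.C_add_left]
    have hsupp : (Finsupp.single i m + f).support = insert i f.support := by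
      have hd : Disjoint (Finsupp.single i m).support f.support := by
        rw [Finsupp.support_single_ne_zero _ hm]
        simp [Finset.disjoint_singleton_left, hi]
      rw [Finsupp.support_add_eq hd, Finsupp.support_single_ne_zero _ hm]
      ext x; simp [Finset.mem_insert, or_comm]
    have hin : ∀ j ∈ y.support, (i:ℕ) ≤ (j:ℕ) := by
      intro j hj
      exact h i (by rw [hsupp]; exact Finset.mem_insert_self _ _) j hj
    have hfy : ∀ i' ∈ f.support, ∀ j ∈ y.support, (i':ℕ) ≤ (j:ℕ) := by
      intro i' hi' j hj
      exact h i' (by rw [hsupp]; exact Finset.mem_insert_of_mem hi') j hj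
    rw [ihf hfy, mul_one]
    -- now C (single i m) y = 1, induct on y
    clear ihf hfy h hsupp hi hm f
    induction y using Finsupp.induction with
    | zero => exact S.C_zero_right _
    | single_add j m' f' hj hm' ihf' =>
      rw [S.C_add_right]
      have hsupp' : (Finsupp.single j m' + f').support = insert j f'.support := by
        have hd : Disjoint (Finsupp.single j m').support f'.support := by
          rw [Finsupp.support_single_ne_zero _ hm']
          simp [Finset.disjoint_singleton_left, hj]
        rw [Finsupp.support_add_eq hd, Finsupp.support_single_ne_zero _ hm']
        ext x; simp [Finset.mem_insert, or_comm]
      have h1 : (i:ℕ) ≤ (j:ℕ) := hin j (by rw [hsupp']; exact Finset.mem_insert_self _ _)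
      rw [S.C_single_single _ _ h1, one_mul]
      exact ihf' (fun j' hj' => hin j' (by rw [hsupp']; exact Finset.mem_insert_of_mem hj'))

lemma zc_support {n : ℕ} (a : NExp n) : (zc a).support = a.support := by
  ext i
  simp [Finsupp.mem_support_iff, zc_apply]

lemma C_of_maxLeMin (S : SkewPoly k R n) {a b : NExp n} (h : maxLeMin a b) :
    S.C (zc a) (zc b) = 1 := by
  apply S.C_eq_one
  intro i hi j hj
  rw [zc_support] at hi hj
  have h1 : (i:ℕ)+1 ≤ maxIdx a := le_maxIdx (Finsupp.mem_support_iff.mp hi)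
  have h2 := h j hj
  omega

end SkewPoly

namespace SkewPoly

variable {k R : Type*} [CommRing k] [Ring R] [Algebra k R] {n : ℕ}

lemma smul_mem_k (I : Submodule Rᵐᵒᵖ R) (c : k) {x : R} (hx : x ∈ I) : c • x ∈ I := by
  have h : c • x = MulOpposite.op ((algebraMap k R) c) • x := by
    rw [Algebra.smul_def, Algebra.commutes, MulOpposite.smul_eq_mul_unop, MulOpposite.unop_op]
  rw [h]
  exact I.smul_mem _ hx

lemma mem_monSet_add (S : SkewPoly k R n) {I : Submodule Rᵐᵒᵖ R} {a : NExp n}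
    (ha : a ∈ S.monSet I) (b : NExp n) : a + b ∈ S.monSet I := by
  have h1 : S.mon a * S.mon b ∈ I := by
    have h : S.mon a * S.mon b = MulOpposite.op (S.mon b) • S.mon a := by
      rw [MulOpposite.smul_eq_mul_unop, MulOpposite.unop_op]
    rw [h]
    exact I.smul_mem _ ha
  rw [S.mon_mul] at h1
  have h2 : S.mon (a + b)
      = ((((S.C (zc a) (zc b))⁻¹ : kˣ) : k)) • (((S.C (zc a) (zc b) : kˣ) : k) • S.mon (a + b)) := by
    rw [smul_smul, ← Units.val_mul, inv_mul_cancel, Units.val_one, one_smul]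
  rw [SkewPoly.monSet, Set.mem_setOf_eq, h2]
  exact smul_mem_k I _ h1

lemma maxIdx_eq_zero {a : NExp n} (h : maxIdx a = 0) : a = 0 := by
  ext j
  by_contra hj
  have := le_maxIdx hj
  omega

/-- Uniqueness of canonical decompositions. -/
lemma canon_unique_aux (S : SkewPoly k R n) {I : Submodule Rᵐᵒᵖ R} {u u' y y' : NExp n}
    (hu : u ∈ S.G I) (hu' : u' ∈ S.G I) (hy : maxLeMin u y) (hy' : maxLeMin u' y')
    (he : u + y = u' + y') (hle : maxIdx u ≤ maxIdx u') : u = u' := by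
  have hej : ∀ j, u j + y j = u' j + y' j := by
    intro j
    have := DFunLike.congr_fun he j
    simpa using this
  by_cases h0 : maxIdx u' = 0
  · have h1 : u' = 0 := maxIdx_eq_zero h0
    have h2 : u = 0 := maxIdx_eq_zero (by omega)
    rw [h1, h2]
  · have hne : u'.support.Nonempty := by
      by_contra hc
      rw [Finset.not_nonempty_iff_eq_empty] at hc
      exact h0 (by rw [maxIdx, hc]; rfl)
    obtain ⟨j0, hj0mem, hj0⟩ := Finset.exists_mem_eq_sup u'.support hne (fun i : Fin n => (i:ℕ)+1)
    have hj0' : (j0:ℕ)+1 = maxIdx u' := hj0.symm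
    have helper1 : ∀ j : Fin n, (j:ℕ)+1 < maxIdx u' → u j ≤ u' j := by
      intro j hj
      have hy'j : y' j = 0 := by
        by_contra hc
        have := hy' j (Finsupp.mem_support_iff.mpr hc)
        omega
      have := hej j
      omega
    have helper2 : ∀ j : Fin n, (j:ℕ)+1 < maxIdx u → u' j ≤ u j := by
      intro j hj
      have hyj : y j = 0 := by
        by_contra hc
        have := hy j (Finsupp.mem_support_iff.mpr hc)
        omega
      have := hej j
      omega
    have hzero : ∀ j : Fin n, maxIdx u' < (j:ℕ)+1 → u j = 0 ∧ u' j = 0 := by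
      intro j hj
      constructor
      · by_contra hc; have := le_maxIdx hc; omega
      · by_contra hc; have := le_maxIdx hc; omega
    by_cases hc : u j0 ≤ u' j0
    · have hle' : u ≤ u' := by
        rw [Finsupp.le_def]
        intro j
        rcases lt_trichotomy ((j:ℕ)+1) (maxIdx u') with h|h|h
        · exact helper1 j h
        · have hjj : j = j0 := Fin.ext (by omega)
          exact hjj ▸ hc
        · exact (hzero j h).1 ▸ Nat.zero_le _
      exact hu'.2 u hu.1 hle'
    · push_neg at hc
      have hj0u : u j0 ≠ 0 := by omega
      have hmax : maxIdx u = maxIdx u' := le_antisymm hle (by have := le_maxIdx hj0u; omega)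
      have hle' : u' ≤ u := by
        rw [Finsupp.le_def]
        intro j
        rcases lt_trichotomy ((j:ℕ)+1) (maxIdx u') with h|h|h
        · exact helper2 j (hmax ▸ h)
        · have hjj : j = j0 := Fin.ext (by omega)
          exact hjj ▸ le_of_lt hc
        · exact (hzero j h).2 ▸ Nat.zero_le _
      exact (hu.2 u' hu'.1 hle').symm

lemma canon_unique (S : SkewPoly k R n) {I : Submodule Rᵐᵒᵖ R} {u u' y y' : NExp n}
    (hu : u ∈ S.G I) (hu' : u' ∈ S.G I) (hy : maxLeMin u y) (hy' : maxLeMin u' y')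
    (he : u + y = u' + y') : u = u' := by
  rcases le_total (maxIdx u) (maxIdx u') with h | h
  · exact S.canon_unique_aux hu hu' hy hy' he h
  · exact (S.canon_unique_aux hu' hu hy' hy he.symm h).symm

variable {S : SkewPoly k R n} {I : Submodule Rᵐᵒᵖ R} {g : NExp n → NExp n}

lemma g_canon (hg : S.IsDecompFun I g) {u y : NExp n} (hu : u ∈ S.G I) (hy : maxLeMin u y) :
    g (u + y) = u := by
  have hw : u + y ∈ S.monSet I := S.mem_monSet_add hu.1 y
  obtain ⟨h1, h2, h3⟩ := hg _ hw
  have he : g (u + y) + ((u + y) - g (u + y)) = u + y := add_tsub_cancel_of_le h2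
  exact S.canon_unique h1 hu h3 hy he

lemma g_idem (hg : S.IsDecompFun I g) {u : NExp n} (hu : u ∈ S.G I) : g u = u := by
  have := g_canon hg hu (maxLeMin_zero u)
  rwa [add_zero] at this

lemma maxLeMin_single {u : NExp n} {i : Fin n} (h : maxIdx u ≤ (i:ℕ)+1) :
    maxLeMin u (Finsupp.single i 1) := by
  intro j hj
  rw [Finsupp.support_single_ne_zero _ one_ne_zero, Finset.mem_singleton] at hj
  exact hj ▸ h

lemma g_add_single (hg : S.IsDecompFun I g) {b : NExp n} (hb : b ∈ S.monSet I) (i : Fin n) :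
    g (b + Finsupp.single i 1) = g (g b + Finsupp.single i 1) := by
  obtain ⟨hG, hle, hmin⟩ := hg b hb
  have hby : g b + (b - g b) = b := add_tsub_cancel_of_le hle
  by_cases hcase : maxIdx (g b) ≤ (i:ℕ)+1
  · have h1 : g (g b + Finsupp.single i 1) = g b := g_canon hg hG (maxLeMin_single hcase)
    have harith : b + Finsupp.single i 1 = g b + ((b - g b) + Finsupp.single i 1) := by
      rw [← add_assoc, hby]
    have h2 : g (b + Finsupp.single i 1) = g b := by
      rw [harith]
      exact g_canon hg hG (maxLeMin_add hmin (maxLeMin_single hcase))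
    rw [h1, h2]
  · push_neg at hcase
    have hUi : g b + Finsupp.single i 1 ∈ S.monSet I := S.mem_monSet_add hG.1 _
    obtain ⟨hG1, hle1, hmin1⟩ := hg _ hUi
    have hmaxle : maxIdx (g (g b + Finsupp.single i 1)) ≤ maxIdx (g b) := by
      refine le_trans (maxIdx_mono hle1) (le_trans (maxIdx_add_le _ _) ?_)
      have := maxIdx_single_le i
      omega
    have harith : b + Finsupp.single i 1
        = g (g b + Finsupp.single i 1)
          + (((g b + Finsupp.single i 1) - g (g b + Finsupp.single i 1)) + (b - g b)) := by
      rw [← add_assoc, add_tsub_cancel_of_le hle1, add_right_comm, hby]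
    rw [harith]
    exact g_canon hg hG1 (maxLeMin_add hmin1 (maxLeMin_of_le hmaxle hmin))

lemma wdeg_add (a b : NExp n) : wdeg (a + b) = wdeg a + wdeg b := by
  unfold wdeg
  exact Finsupp.sum_add_index' (fun _ => rfl) (fun _ _ _ => rfl)

lemma wdeg_single (i : Fin n) (m : ℕ) : wdeg (Finsupp.single i m) = m :=
  Finsupp.sum_single_index rfl

lemma wdeg_eq_zero {a : NExp n} (h : wdeg a = 0) : a = 0 := by
  ext j
  rw [Finsupp.coe_zero, Pi.zero_apply]
  by_contra hj
  have hmem : j ∈ a.support := Finsupp.mem_support_iff.mpr hj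
  rw [wdeg, Finsupp.sum] at h
  exact hj (Finset.sum_eq_zero_iff.mp h j hmem)

lemma g_add_g (hg : S.IsDecompFun I g) {b : NExp n} (hb : b ∈ S.monSet I) (a : NExp n) :
    g (b + a) = g (g b + a) := by
  suffices H : ∀ N (a b : NExp n), b ∈ S.monSet I → wdeg a ≤ N → g (b + a) = g (g b + a) from
    H (wdeg a) a b hb le_rfl
  intro N
  induction N with
  | zero =>
    intro a b hb hN
    rw [wdeg_eq_zero (Nat.le_zero.mp hN), add_zero, add_zero, g_idem hg (hg b hb).1]
  | succ N ih =>
    intro a b hb hN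
    by_cases ha : a = 0
    · rw [ha, add_zero, add_zero, g_idem hg (hg b hb).1]
    · obtain ⟨i, hi⟩ := Finsupp.ne_iff.mp ha
      simp only [Finsupp.coe_zero, Pi.zero_apply] at hi
      have hsle : Finsupp.single i 1 ≤ a := by
        rw [Finsupp.single_le_iff]
        omega
      have key : (a - Finsupp.single i 1) + Finsupp.single i 1 = a := tsub_add_cancel_of_le hsle
      have hwd : wdeg (a - Finsupp.single i 1) ≤ N := by
        have := wdeg_add (a - Finsupp.single i 1) (Finsupp.single i 1)
        rw [key, wdeg_single] at this
        omega
      calc g (b + a) = g ((b + (a - Finsupp.single i 1)) + Finsupp.single i 1) := by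
            rw [add_assoc, key]
        _ = g (g (b + (a - Finsupp.single i 1)) + Finsupp.single i 1) :=
            g_add_single hg (S.mem_monSet_add hb _) i
        _ = g (g (g b + (a - Finsupp.single i 1)) + Finsupp.single i 1) := by
            rw [ih (a - Finsupp.single i 1) b hb hwd]
        _ = g ((g b + (a - Finsupp.single i 1)) + Finsupp.single i 1) :=
            (g_add_single hg (S.mem_monSet_add (hg b hb).1.1 _) i).symm
        _ = g (g b + a) := by rw [add_assoc, key]

lemma g_maxIdx_le_single (hg : S.IsDecompFun I g) {b : NExp n} (hb : b ∈ S.monSet I) (i : Fin n) :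
    maxIdx (g (b + Finsupp.single i 1)) ≤ maxIdx (g b) := by
  rw [g_add_single hg hb i]
  by_cases hcase : maxIdx (g b) ≤ (i:ℕ)+1
  · rw [g_canon hg (hg b hb).1 (maxLeMin_single hcase)]
  · push_neg at hcase
    have hUi : g b + Finsupp.single i 1 ∈ S.monSet I := S.mem_monSet_add (hg b hb).1.1 _
    refine le_trans (maxIdx_mono (hg _ hUi).2.1) (le_trans (maxIdx_add_le _ _) ?_)
    have := maxIdx_single_le i
    omega

lemma g_maxIdx_le (hg : S.IsDecompFun I g) {b : NExp n} (hb : b ∈ S.monSet I) (a : NExp n) :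
    maxIdx (g (b + a)) ≤ maxIdx (g b) := by
  suffices H : ∀ N (a b : NExp n), b ∈ S.monSet I → wdeg a ≤ N →
      maxIdx (g (b + a)) ≤ maxIdx (g b) from H (wdeg a) a b hb le_rfl
  intro N
  induction N with
  | zero =>
    intro a b hb hN
    rw [wdeg_eq_zero (Nat.le_zero.mp hN), add_zero]
  | succ N ih =>
    intro a b hb hN
    by_cases ha : a = 0
    · rw [ha, add_zero]
    · obtain ⟨i, hi⟩ := Finsupp.ne_iff.mp ha
      simp only [Finsupp.coe_zero, Pi.zero_apply] at hi
      have hsle : Finsupp.single i 1 ≤ a := by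
        rw [Finsupp.single_le_iff]
        omega
      have key : (a - Finsupp.single i 1) + Finsupp.single i 1 = a := tsub_add_cancel_of_le hsle
      have hwd : wdeg (a - Finsupp.single i 1) ≤ N := by
        have := wdeg_add (a - Finsupp.single i 1) (Finsupp.single i 1)
        rw [key, wdeg_single] at this
        omega
      have h1 : maxIdx (g ((b + (a - Finsupp.single i 1)) + Finsupp.single i 1))
          ≤ maxIdx (g (b + (a - Finsupp.single i 1))) :=
        g_maxIdx_le_single hg (S.mem_monSet_add hb _) i
      have h2 := ih (a - Finsupp.single i 1) b hb hwd
      calc maxIdx (g (b + a)) = maxIdx (g ((b + (a - Finsupp.single i 1)) + Finsupp.single i 1)) := by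
            rw [add_assoc, key]
        _ ≤ maxIdx (g b) := le_trans h1 h2

end SkewPoly

section ListLemmas

variable {n : ℕ}

lemma sort_perm (l : List (Fin n)) : (List.insertionSort (· ≤ ·) l).Perm l :=
  List.perm_insertionSort _ _

lemma sort_sorted (l : List (Fin n)) : (List.insertionSort (· ≤ ·) l).Pairwise (· ≤ ·) :=
  List.pairwise_insertionSort _ _

lemma sort_eq_of_perm {l l' : List (Fin n)} (h : l.Perm l') :
    List.insertionSort (· ≤ ·) l = List.insertionSort (· ≤ ·) l' :=
  List.Perm.eq_of_pairwise' (sort_sorted l) (sort_sorted l')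
    ((sort_perm l).trans (h.trans (sort_perm l').symm))

lemma mem_sort {l : List (Fin n)} {i : Fin n} : i ∈ List.insertionSort (· ≤ ·) l ↔ i ∈ l :=
  (sort_perm l).mem_iff

lemma sort_sorted_lt {l : List (Fin n)} (h : l.Nodup) :
    (List.insertionSort (· ≤ ·) l).Pairwise (· < ·) :=
  ((sort_sorted l).sortedLE.sortedLT_of_nodup ((sort_perm l).nodup_iff.mpr h)).pairwise

lemma listMon_append (σ τ : List (Fin n)) : listMon (σ ++ τ) = listMon σ + listMon τ := by
  simp [listMon, List.map_append, List.sum_append]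

lemma listMon_perm {σ τ : List (Fin n)} (h : σ.Perm τ) : listMon σ = listMon τ :=
  (h.map _).sum_eq

lemma invCount_append_left (σ σ' τ : List (Fin n)) :
    invCount (σ ++ σ') τ = invCount σ τ + invCount σ' τ := by
  simp [invCount, List.map_append, List.sum_append]

lemma invCount_append_right (σ τ τ' : List (Fin n)) :
    invCount σ (τ ++ τ') = invCount σ τ + invCount σ τ' := by
  induction σ with
  | nil => rfl
  | cons a σ ih =>
    simp only [invCount, List.map_cons, List.sum_cons, List.filter_append,
      List.length_append] at *
    omega

lemma invCount_perm_left {σ σ' : List (Fin n)} (τ : List (Fin n)) (h : σ.Perm σ') :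
    invCount σ τ = invCount σ' τ :=
  (h.map _).sum_eq

lemma invCount_perm_right (σ : List (Fin n)) {τ τ' : List (Fin n)} (h : τ.Perm τ') :
    invCount σ τ = invCount σ τ' := by
  induction σ with
  | nil => rfl
  | cons a σ ih =>
    simp only [invCount, List.map_cons, List.sum_cons] at *
    rw [(h.filter _).length_eq]
    omega

end ListLemmas

section LmulLemmas

open Finsupp

variable {k R : Type*} [CommRing k] [Ring R] [Algebra k R] {n : ℕ}
variable {S : SkewPoly k R n} {I : Submodule Rᵐᵒᵖ R} {g : NExp n → NExp n}

lemma rmul_zero (f : EKSym n →₀ R) : rmul f (0:R) = 0 := by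
  ext s; simp [rmul]

lemma rmul_one (f : EKSym n →₀ R) : rmul f (1:R) = f := by
  ext s; simp [rmul]

lemma zero_rmul (r : R) : rmul (0 : EKSym n →₀ R) r = 0 := by
  ext s; simp [rmul]

lemma rmul_single (A : EKSym n) (v r : R) :
    rmul (Finsupp.single A v) r = Finsupp.single A (v * r) := by
  unfold rmul
  rw [Finsupp.mapRange_single]

lemma lmul_single_single (s t : EKSym n) (r r' : R) :
    lmul S I g (Finsupp.single s r) (Finsupp.single t r')
      = rmul (psym S I g s t)
          (((S.basis.repr r).sum fun a c =>
            c • (((S.chi (zc a) (zc (listMon t.1) + zc t.2) : kˣ) : k) • S.mon a)) * r') := by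
  unfold lmul
  rw [Finsupp.sum_single_index, Finsupp.sum_single_index]
  · rw [mul_zero, rmul_zero]
  · simp [map_zero, Finsupp.sum_zero_index, rmul_zero]

lemma repr_one : S.basis.repr (1:R) = Finsupp.single 0 1 := by
  rw [← S.mon_zero, ← S.basis_eq, S.basis.repr_self]

lemma repr_mon (a : NExp n) : S.basis.repr (S.mon a) = Finsupp.single a 1 := by
  rw [← S.basis_eq, S.basis.repr_self]

lemma coeffsum_one (X : ZExp n) :
    ((S.basis.repr (1:R)).sum fun a c =>
      c • (((S.chi (zc a) X : kˣ) : k) • S.mon a)) = 1 := by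
  rw [repr_one, Finsupp.sum_single_index (by rw [zero_smul])]
  rw [zc_zero, S.chi_zero_left, Units.val_one, one_smul, one_smul, S.mon_zero]

lemma coeffsum_smul_mon (c : k) (y : NExp n) (X : ZExp n) :
    ((S.basis.repr (c • S.mon y)).sum fun a c' =>
      c' • (((S.chi (zc a) X : kˣ) : k) • S.mon a))
    = (c * ((S.chi (zc y) X : kˣ) : k)) • S.mon y := by
  rw [map_smul, repr_mon, Finsupp.smul_single, smul_eq_mul, mul_one,
    Finsupp.sum_single_index (by rw [zero_smul])]
  rw [smul_smul]

lemma lmul_single_one (s t : EKSym n) (r' : R) :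
    lmul S I g (Finsupp.single s 1) (Finsupp.single t r') = rmul (psym S I g s t) r' := by
  rw [lmul_single_single, coeffsum_one, one_mul]

lemma lmul_zero_left (h : EKSym n →₀ R) : lmul S I g 0 h = 0 := by
  unfold lmul
  rw [Finsupp.sum_zero_index]

lemma lmul_zero_right (f : EKSym n →₀ R) : lmul S I g f 0 = 0 := by
  unfold lmul
  simp [Finsupp.sum_zero_index]

lemma lmul_smulmon_single (a : EKSym n) (c : k) (y : NExp n) (p : EKSym n) :
    lmul S I g (Finsupp.single a (c • S.mon y)) (Finsupp.single p 1)
      = rmul (psym S I g a p)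
          ((c * ((S.chi (zc y) (zc (listMon p.1) + zc p.2) : kˣ) : k)) • S.mon y) := by
  rw [lmul_single_single, coeffsum_smul_mon, mul_one]

end LmulLemmas

section CondEquiv

open Finsupp SkewPoly

variable {k R : Type*} [CommRing k] [Ring R] [Algebra k R] {n : ℕ}
variable {S : SkewPoly k R n} {I : Submodule Rᵐᵒᵖ R} {g : NExp n → NExp n}

lemma nodup_of_sorted_lt {l : List (Fin n)} (h : l.Pairwise (· < ·)) : l.Nodup :=
  h.imp ne_of_lt

lemma condL_iff (hg : S.IsDecompFun I g) {σ τ ρ : List (Fin n)} {u v w : NExp n}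
    (hs : Adm S I (σ, u)) (ht : Adm S I (τ, v)) (hp : Adm S I (ρ, w)) :
    ((σ.Disjoint τ ∧ Adm S I (List.insertionSort (· ≤ ·) (σ ++ τ), g (u + v))) ∧
     ((List.insertionSort (· ≤ ·) (σ ++ τ)).Disjoint ρ ∧
      Adm S I (List.insertionSort (· ≤ ·) (List.insertionSort (· ≤ ·) (σ ++ τ) ++ ρ),
        g (g (u + v) + w)))) ↔
    ((σ.Disjoint τ ∧ σ.Disjoint ρ ∧ τ.Disjoint ρ) ∧
     Adm S I (List.insertionSort (· ≤ ·) (σ ++ τ ++ ρ), g (u + v + w))) := by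
  have hu : u ∈ S.monSet I := hs.2.1.1
  have hv : v ∈ S.monSet I := ht.2.1.1
  have huv : u + v ∈ S.monSet I := S.mem_monSet_add hu v
  have hsort : List.insertionSort (· ≤ ·) (List.insertionSort (· ≤ ·) (σ ++ τ) ++ ρ)
      = List.insertionSort (· ≤ ·) (σ ++ τ ++ ρ) :=
    sort_eq_of_perm ((sort_perm (σ ++ τ)).append_right ρ)
  have hgw : g (g (u + v) + w) = g (u + v + w) := (g_add_g hg huv w).symm
  have hmem : ∀ i : Fin n, i ∈ List.insertionSort (· ≤ ·) (σ ++ τ) ↔ i ∈ σ ++ τ :=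
    fun i => mem_sort
  constructor
  · rintro ⟨⟨hd1, _⟩, hd2, hA2⟩
    refine ⟨⟨hd1, ?_, ?_⟩, ?_⟩
    · intro a ha hb
      exact hd2 (mem_sort.mpr (List.mem_append_left τ ha)) hb
    · intro a ha hb
      exact hd2 (mem_sort.mpr (List.mem_append_right σ ha)) hb
    · rw [← hsort, ← hgw]
      exact hA2
  · rintro ⟨⟨hd1, hd2, hd3⟩, hAF⟩
    have hmax1 : maxIdx (g (u + v + w)) ≤ maxIdx (g (u + v)) := by
      have h1 := g_maxIdx_le hg (hg _ huv).1.1 w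
      rw [← g_add_g hg huv w, g_idem hg (hg _ huv).1] at h1
      exact h1
    refine ⟨⟨hd1, ?_, (hg _ huv).1, ?_⟩, ?_, ?_⟩
    · exact sort_sorted_lt (List.nodup_append.mpr
        ⟨nodup_of_sorted_lt hs.1, nodup_of_sorted_lt ht.1, fun a ha b hb hab => hd1 ha (by subst hab; exact hb)⟩)
    · intro i hi
      have hi' : i ∈ σ ++ τ ++ ρ := List.mem_append_left ρ (mem_sort.mp hi)
      have := hAF.2.2 i (mem_sort.mpr hi')
      dsimp only at this ⊢
      omega
    · intro a ha hb
      rcases List.mem_append.mp (mem_sort.mp ha) with h | h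
      · exact hd2 h hb
      · exact hd3 h hb
    · rw [hsort, hgw]
      exact hAF

lemma condR_iff (hg : S.IsDecompFun I g) {σ τ ρ : List (Fin n)} {u v w : NExp n}
    (hs : Adm S I (σ, u)) (ht : Adm S I (τ, v)) (hp : Adm S I (ρ, w)) :
    ((τ.Disjoint ρ ∧ Adm S I (List.insertionSort (· ≤ ·) (τ ++ ρ), g (v + w))) ∧
     (σ.Disjoint (List.insertionSort (· ≤ ·) (τ ++ ρ)) ∧
      Adm S I (List.insertionSort (· ≤ ·) (σ ++ List.insertionSort (· ≤ ·) (τ ++ ρ)),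
        g (u + g (v + w))))) ↔
    ((σ.Disjoint τ ∧ σ.Disjoint ρ ∧ τ.Disjoint ρ) ∧
     Adm S I (List.insertionSort (· ≤ ·) (σ ++ τ ++ ρ), g (u + v + w))) := by
  have hv : v ∈ S.monSet I := ht.2.1.1
  have hvw : v + w ∈ S.monSet I := S.mem_monSet_add hv w
  have hsort : List.insertionSort (· ≤ ·) (σ ++ List.insertionSort (· ≤ ·) (τ ++ ρ))
      = List.insertionSort (· ≤ ·) (σ ++ τ ++ ρ) := by
    refine sort_eq_of_perm (((sort_perm (τ ++ ρ)).append_left σ).trans ?_)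
    rw [← List.append_assoc]
  have hgw : g (u + g (v + w)) = g (u + v + w) := by
    rw [add_comm u (g (v + w)), ← g_add_g hg hvw u]
    congr 1
    abel
  constructor
  · rintro ⟨⟨hd3, _⟩, hdS, hA2⟩
    refine ⟨⟨?_, ?_, hd3⟩, ?_⟩
    · intro a ha hb
      exact hdS ha (mem_sort.mpr (List.mem_append_left ρ hb))
    · intro a ha hb
      exact hdS ha (mem_sort.mpr (List.mem_append_right τ hb))
    · rw [← hsort, ← hgw]
      exact hA2
  · rintro ⟨⟨hd1, hd2, hd3⟩, hAF⟩
    have hmax1 : maxIdx (g (u + v + w)) ≤ maxIdx (g (v + w)) := by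
      have h1 := g_maxIdx_le hg (hg _ hvw).1.1 u
      rw [← g_add_g hg hvw u, g_idem hg (hg _ hvw).1] at h1
      calc maxIdx (g (u + v + w)) = maxIdx (g (v + w + u)) := by
            congr 2; abel
        _ ≤ maxIdx (g (v + w)) := h1
    refine ⟨⟨hd3, ?_, (hg _ hvw).1, ?_⟩, ?_, ?_⟩
    · exact sort_sorted_lt (List.nodup_append.mpr
        ⟨nodup_of_sorted_lt ht.1, nodup_of_sorted_lt hp.1, fun a ha b hb hab => hd3 ha (by subst hab; exact hb)⟩)
    · intro i hi
      have hi' : i ∈ σ ++ τ ++ ρ := by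
        rcases List.mem_append.mp (mem_sort.mp hi) with h | h
        · exact List.mem_append_left ρ (List.mem_append_right σ h)
        · exact List.mem_append_right _ h
      have := hAF.2.2 i (mem_sort.mpr hi')
      dsimp only at this ⊢
      omega
    · intro a ha hb
      rcases List.mem_append.mp (mem_sort.mp hb) with h | h
      · exact hd1 ha h
      · exact hd2 ha h
    · rw [hsort, hgw]
      exact hAF

end CondEquiv

namespace SkewPoly

variable {k R : Type*} [CommRing k] [Ring R] [Algebra k R] {n : ℕ}

lemma units_assoc (S : SkewPoly k R n) (a1 a2 a3 b1 b2 b3 P Q W : ZExp n)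
    (h1 : S.C P (a1 + a2 - P) = 1) (h2 : S.C Q (a2 + a3 - Q) = 1)
    (h3 : S.C W (a1 + a2 - P) = 1) (h4 : S.C W (a2 + a3 - Q) = 1) :
    S.chi P b3 * S.C (b1+b2) b3 * S.C P a3 * S.C (b1+b2) (W-P) * S.C b3 (W-a3) *
    S.chi a1 b2 * S.C b1 b2 * S.C a1 a2 * S.C b1 (P-a1) * S.C b2 (P-a2) *
    S.chi (a1+a2-P) (b3+a3) * S.C (P+a3-W) (a1+a2-P)
    =
    S.chi a1 (b2+b3) * S.C b1 (b2+b3) * S.C a1 Q * S.C b1 (W-a1) * S.C (b2+b3) (W-Q) *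
    S.chi a2 b3 * S.C b2 b3 * S.C a2 a3 * S.C b2 (Q-a2) * S.C b3 (Q-a3) *
    S.C (a1+Q-W) (a2+a3-Q) := by
  have hadd_l : ∀ a b c : ZExp n,
      Additive.ofMul (S.C (a+b) c) = Additive.ofMul (S.C a c) + Additive.ofMul (S.C b c) :=
    fun a b c => by rw [S.C_add_left, ofMul_mul]
  have hadd_r : ∀ a b c : ZExp n,
      Additive.ofMul (S.C a (b+c)) = Additive.ofMul (S.C a b) + Additive.ofMul (S.C a c) :=
    fun a b c => by rw [S.C_add_right, ofMul_mul]
  have hsub_l : ∀ a b c : ZExp n,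
      Additive.ofMul (S.C (a-b) c) = Additive.ofMul (S.C a c) - Additive.ofMul (S.C b c) :=
    fun a b c => by
      rw [S.C_sub_left, ofMul_mul, ofMul_inv, ← sub_eq_add_neg]
  have hsub_r : ∀ a b c : ZExp n,
      Additive.ofMul (S.C a (b-c)) = Additive.ofMul (S.C a b) - Additive.ofMul (S.C a c) :=
    fun a b c => by
      rw [S.C_sub_right, ofMul_mul, ofMul_inv, ← sub_eq_add_neg]
  have H1 : Additive.ofMul (S.C P P) = Additive.ofMul (S.C P a1) + Additive.ofMul (S.C P a2) := by
    have h := congrArg Additive.ofMul h1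
    rw [hsub_r, hadd_r, ofMul_one, sub_eq_zero] at h
    exact h.symm
  have H2 : Additive.ofMul (S.C Q Q) = Additive.ofMul (S.C Q a2) + Additive.ofMul (S.C Q a3) := by
    have h := congrArg Additive.ofMul h2
    rw [hsub_r, hadd_r, ofMul_one, sub_eq_zero] at h
    exact h.symm
  have H3 : Additive.ofMul (S.C W P) = Additive.ofMul (S.C W a1) + Additive.ofMul (S.C W a2) := by
    have h := congrArg Additive.ofMul h3
    rw [hsub_r, hadd_r, ofMul_one, sub_eq_zero] at h
    exact h.symm
  have H4 : Additive.ofMul (S.C W Q) = Additive.ofMul (S.C W a2) + Additive.ofMul (S.C W a3) := by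
    have h := congrArg Additive.ofMul h4
    rw [hsub_r, hadd_r, ofMul_one, sub_eq_zero] at h
    exact h.symm
  apply Additive.ofMul.injective
  simp only [SkewPoly.chi, ofMul_mul, ofMul_inv, hadd_l, hadd_r, hsub_l, hsub_r]
  rw [H1, H2, H3, H4]
  abel

end SkewPoly

section Assembly

open Finsupp SkewPoly

variable {k R : Type*} [CommRing k] [Ring R] [Algebra k R] {n : ℕ}
variable {S : SkewPoly k R n} {I : Submodule Rᵐᵒᵖ R} {g : NExp n → NExp n}

lemma listMon_sort_append (σ τ : List (Fin n)) :
    listMon (List.insertionSort (· ≤ ·) (σ ++ τ)) = listMon σ + listMon τ :=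
  (listMon_perm (sort_perm _)).trans (listMon_append σ τ)

lemma smulmon_mul (c d : k) (x y : NExp n) :
    (c • S.mon x) * (d • S.mon y)
      = (c * (d * ((S.C (zc x) (zc y) : kˣ) : k))) • S.mon (x + y) := by
  rw [smul_mul_assoc, mul_smul_comm, S.mon_mul, smul_smul, smul_smul, mul_assoc]

theorem assoc_main
    (S : SkewPoly k R n) (I : Submodule Rᵐᵒᵖ R)
    (g : NExp n → NExp n) (hg : S.IsDecompFun I g) :
    ∀ s t p : EKSym n, Adm S I s → Adm S I t → Adm S I p →
      lmul S I g (lmul S I g (Finsupp.single s 1) (Finsupp.single t 1))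
          (Finsupp.single p 1)
        = lmul S I g (Finsupp.single s 1)
            (lmul S I g (Finsupp.single t 1) (Finsupp.single p 1)) := by
  intro s t p hs ht hp
  obtain ⟨σ, u⟩ := s
  obtain ⟨τ, v⟩ := t
  obtain ⟨ρ, w⟩ := p
  have hu : u ∈ S.monSet I := hs.2.1.1
  have hv : v ∈ S.monSet I := ht.2.1.1
  have huv : u + v ∈ S.monSet I := S.mem_monSet_add hu v
  have hvw : v + w ∈ S.monSet I := S.mem_monSet_add hv w
  have hgw1 : g (g (u + v) + w) = g (u + v + w) := (g_add_g hg huv w).symm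
  have hgw2 : g (u + g (v + w)) = g (u + v + w) := by
    rw [add_comm u (g (v + w)), ← g_add_g hg hvw u]
    congr 1
    abel
  have hL := condL_iff hg hs ht hp
  have hR := condR_iff hg hs ht hp
  simp only [lmul_single_one, rmul_one]
  by_cases hCL : (σ.Disjoint τ ∧ Adm S I (List.insertionSort (· ≤ ·) (σ ++ τ), g (u + v))) ∧
     ((List.insertionSort (· ≤ ·) (σ ++ τ)).Disjoint ρ ∧
      Adm S I (List.insertionSort (· ≤ ·) (List.insertionSort (· ≤ ·) (σ ++ τ) ++ ρ),
        g (g (u + v) + w)))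
  · -- positive case
    have hCR := hR.mpr (hL.mp hCL)
    obtain ⟨hc1, hc2⟩ := hCL
    obtain ⟨hc3, hc4⟩ := hCR
    have hps1 : psym S I g (σ, u) (τ, v)
        = Finsupp.single (List.insertionSort (· ≤ ·) (σ ++ τ), g (u + v))
            ((((-1 : k) ^ invCount σ τ *
              ((S.chi (zc u) (zc (listMon τ)) : kˣ) : k) *
              ((S.C (zc (listMon σ)) (zc (listMon τ)) : kˣ) : k) *
              ((S.C (zc u) (zc v) : kˣ) : k) *
              ((S.C (zc (listMon σ)) (zc (g (u + v)) - zc u) : kˣ) : k) *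
              ((S.C (zc (listMon τ)) (zc (g (u + v)) - zc v) : kˣ) : k))) •
              S.mon (u + v - g (u + v))) := by
      unfold psym
      rw [if_pos hc1, Finsupp.smul_single]
    have hps3 : psym S I g (τ, v) (ρ, w)
        = Finsupp.single (List.insertionSort (· ≤ ·) (τ ++ ρ), g (v + w))
            ((((-1 : k) ^ invCount τ ρ *
              ((S.chi (zc v) (zc (listMon ρ)) : kˣ) : k) *
              ((S.C (zc (listMon τ)) (zc (listMon ρ)) : kˣ) : k) *
              ((S.C (zc v) (zc w) : kˣ) : k) *
              ((S.C (zc (listMon τ)) (zc (g (v + w)) - zc v) : kˣ) : k) *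
              ((S.C (zc (listMon ρ)) (zc (g (v + w)) - zc w) : kˣ) : k))) •
              S.mon (v + w - g (v + w))) := by
      unfold psym
      rw [if_pos hc3, Finsupp.smul_single]
    have hps2 : psym S I g (List.insertionSort (· ≤ ·) (σ ++ τ), g (u + v)) (ρ, w)
        = Finsupp.single
            (List.insertionSort (· ≤ ·) (List.insertionSort (· ≤ ·) (σ ++ τ) ++ ρ),
              g (g (u + v) + w))
            ((((-1 : k) ^ invCount (List.insertionSort (· ≤ ·) (σ ++ τ)) ρ *
              ((S.chi (zc (g (u + v))) (zc (listMon ρ)) : kˣ) : k) *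
              ((S.C (zc (listMon (List.insertionSort (· ≤ ·) (σ ++ τ)))) (zc (listMon ρ)) : kˣ) : k) *
              ((S.C (zc (g (u + v))) (zc w) : kˣ) : k) *
              ((S.C (zc (listMon (List.insertionSort (· ≤ ·) (σ ++ τ))))
                (zc (g (g (u + v) + w)) - zc (g (u + v))) : kˣ) : k) *
              ((S.C (zc (listMon ρ)) (zc (g (g (u + v) + w)) - zc w) : kˣ) : k))) •
              S.mon (g (u + v) + w - g (g (u + v) + w))) := by
      unfold psym
      rw [if_pos hc2, Finsupp.smul_single]
    have hps4 : psym S I g (σ, u) (List.insertionSort (· ≤ ·) (τ ++ ρ), g (v + w))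
        = Finsupp.single
            (List.insertionSort (· ≤ ·) (σ ++ List.insertionSort (· ≤ ·) (τ ++ ρ)),
              g (u + g (v + w)))
            ((((-1 : k) ^ invCount σ (List.insertionSort (· ≤ ·) (τ ++ ρ)) *
              ((S.chi (zc u) (zc (listMon (List.insertionSort (· ≤ ·) (τ ++ ρ)))) : kˣ) : k) *
              ((S.C (zc (listMon σ)) (zc (listMon (List.insertionSort (· ≤ ·) (τ ++ ρ)))) : kˣ) : k) *
              ((S.C (zc u) (zc (g (v + w))) : kˣ) : k) *
              ((S.C (zc (listMon σ)) (zc (g (u + g (v + w))) - zc u) : kˣ) : k) *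
              ((S.C (zc (listMon (List.insertionSort (· ≤ ·) (τ ++ ρ))))
                (zc (g (u + g (v + w))) - zc (g (v + w))) : kˣ) : k))) •
              S.mon (u + g (v + w) - g (u + g (v + w)))) := by
      unfold psym
      rw [if_pos hc4, Finsupp.smul_single]
    rw [hps1, hps3, lmul_smulmon_single, lmul_single_one, hps2, hps4, rmul_single, rmul_single,
      smulmon_mul, smulmon_mul]
    -- normalize symbols
    have hsortL : List.insertionSort (· ≤ ·) (List.insertionSort (· ≤ ·) (σ ++ τ) ++ ρ)
        = List.insertionSort (· ≤ ·) (σ ++ τ ++ ρ) :=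
      sort_eq_of_perm ((sort_perm (σ ++ τ)).append_right ρ)
    have hsortR : List.insertionSort (· ≤ ·) (σ ++ List.insertionSort (· ≤ ·) (τ ++ ρ))
        = List.insertionSort (· ≤ ·) (σ ++ τ ++ ρ) := by
      refine sort_eq_of_perm (((sort_perm (τ ++ ρ)).append_left σ).trans ?_)
      rw [← List.append_assoc]
    have hil : invCount (List.insertionSort (· ≤ ·) (σ ++ τ)) ρ
        = invCount σ ρ + invCount τ ρ := by
      rw [invCount_perm_left ρ (sort_perm (σ ++ τ)), invCount_append_left]
    have hir : invCount σ (List.insertionSort (· ≤ ·) (τ ++ ρ))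
        = invCount σ τ + invCount σ ρ := by
      rw [invCount_perm_right σ (sort_perm (τ ++ ρ)), invCount_append_right]
    have hml : listMon (List.insertionSort (· ≤ ·) (σ ++ τ)) = listMon σ + listMon τ :=
      listMon_sort_append σ τ
    have hmr : listMon (List.insertionSort (· ≤ ·) (τ ++ ρ)) = listMon τ + listMon ρ :=
      listMon_sort_append τ ρ
    rw [hsortL, hsortR, hgw1, hgw2, hil, hir, hml, hmr]
    -- monomial equality
    have l1 : g (u + v) ≤ u + v := (hg _ huv).2.1
    have l3 : g (v + w) ≤ v + w := (hg _ hvw).2.1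
    have l2 : g (u + v + w) ≤ g (u + v) + w := by
      have h := (hg _ (S.mem_monSet_add (hg _ huv).1.1 w)).2.1
      rwa [hgw1] at h
    have l4 : g (u + v + w) ≤ u + g (v + w) := by
      have h := (hg _ (S.mem_monSet_add (hg _ huv).1.1 w)).2.1
      have h' := (hg _ (S.mem_monSet_add hu (g (v + w)))).2.1
      rwa [hgw2] at h'
    have hYeq : (g (u + v) + w - g (u + v + w)) + (u + v - g (u + v))
        = (u + g (v + w) - g (u + v + w)) + (v + w - g (v + w)) := by
      ext j
      have e1 := Finsupp.le_def.mp l1 j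
      have e2 := Finsupp.le_def.mp l2 j
      have e3 := Finsupp.le_def.mp l3 j
      have e4 := Finsupp.le_def.mp l4 j
      simp only [Finsupp.add_apply, Finsupp.tsub_apply] at *
      omega
    rw [hYeq]
    congr 1
    congr 1
    -- coefficient identity
    dsimp only
    have hmaxWU : maxIdx (g (u + v + w)) ≤ maxIdx (g (u + v)) := by
      have h1 := g_maxIdx_le hg (hg _ huv).1.1 w
      rwa [hgw1, g_idem hg (hg _ huv).1] at h1
    have hmaxWV : maxIdx (g (u + v + w)) ≤ maxIdx (g (v + w)) := by
      have h1 := g_maxIdx_le hg (hg _ hvw).1.1 u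
      rw [g_idem hg (hg _ hvw).1] at h1
      have e : g (v + w) + u = u + g (v + w) := add_comm _ _
      rwa [e, hgw2] at h1
    have hU0 := S.C_of_maxLeMin (hg _ huv).2.2
    have hV0 := S.C_of_maxLeMin (hg _ hvw).2.2
    have hWy0 := S.C_of_maxLeMin (maxLeMin_of_le hmaxWU (hg _ huv).2.2)
    have hWz0 := S.C_of_maxLeMin (maxLeMin_of_le hmaxWV (hg _ hvw).2.2)
    rw [zc_sub _ _ l1, zc_add] at hU0 hWy0
    rw [zc_sub _ _ l3, zc_add] at hV0 hWz0
    have key := S.units_assoc (zc u) (zc v) (zc w) (zc (listMon σ)) (zc (listMon τ))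
      (zc (listMon ρ)) (zc (g (u + v))) (zc (g (v + w))) (zc (g (u + v + w)))
      hU0 hV0 hWy0 hWz0
    have keyk := congrArg (Units.val) key
    simp only [Units.val_mul] at keyk
    rw [zc_sub _ _ l1, zc_sub _ _ l2, zc_sub _ _ l3, zc_sub _ _ l4]
    simp only [zc_add, pow_add]
    linear_combination ((-1:k)^(invCount σ τ) * (-1:k)^(invCount σ ρ)
      * (-1:k)^(invCount τ ρ)) * keyk
  · -- zero case
    have hCR : ¬ ((τ.Disjoint ρ ∧ Adm S I (List.insertionSort (· ≤ ·) (τ ++ ρ), g (v + w))) ∧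
       (σ.Disjoint (List.insertionSort (· ≤ ·) (τ ++ ρ)) ∧
        Adm S I (List.insertionSort (· ≤ ·) (σ ++ List.insertionSort (· ≤ ·) (τ ++ ρ)),
          g (u + g (v + w))))) := fun h => hCL (hL.mpr (hR.mp h))
    have hlhs : lmul S I g (psym S I g (σ, u) (τ, v)) (Finsupp.single (ρ, w) 1) = 0 := by
      by_cases hc1 : σ.Disjoint τ ∧
          Adm S I (List.insertionSort (· ≤ ·) (σ ++ τ), g (u + v))
      · have hc2 : ¬ ((List.insertionSort (· ≤ ·) (σ ++ τ)).Disjoint ρ ∧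
            Adm S I (List.insertionSort (· ≤ ·) (List.insertionSort (· ≤ ·) (σ ++ τ) ++ ρ),
              g (g (u + v) + w))) := fun h => hCL ⟨hc1, h⟩
        have hz : psym S I g (List.insertionSort (· ≤ ·) (σ ++ τ), g (u + v)) (ρ, w) = 0 := by
          unfold psym
          rw [if_neg hc2]
        have hps1 : psym S I g (σ, u) (τ, v)
            = Finsupp.single (List.insertionSort (· ≤ ·) (σ ++ τ), g (u + v))
                ((((-1 : k) ^ invCount σ τ *
                  ((S.chi (zc u) (zc (listMon τ)) : kˣ) : k) *
                  ((S.C (zc (listMon σ)) (zc (listMon τ)) : kˣ) : k) *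
                  ((S.C (zc u) (zc v) : kˣ) : k) *
                  ((S.C (zc (listMon σ)) (zc (g (u + v)) - zc u) : kˣ) : k) *
                  ((S.C (zc (listMon τ)) (zc (g (u + v)) - zc v) : kˣ) : k))) •
                  S.mon (u + v - g (u + v))) := by
          unfold psym
          rw [if_pos hc1, Finsupp.smul_single]
        rw [hps1, lmul_smulmon_single, hz, zero_rmul]
      · have hz : psym S I g (σ, u) (τ, v) = 0 := by
          unfold psym
          rw [if_neg hc1]
        rw [hz, lmul_zero_left]
    have hrhs : lmul S I g (Finsupp.single (σ, u) 1) (psym S I g (τ, v) (ρ, w)) = 0 := by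
      by_cases hc3 : τ.Disjoint ρ ∧
          Adm S I (List.insertionSort (· ≤ ·) (τ ++ ρ), g (v + w))
      · have hc4 : ¬ (σ.Disjoint (List.insertionSort (· ≤ ·) (τ ++ ρ)) ∧
            Adm S I (List.insertionSort (· ≤ ·) (σ ++ List.insertionSort (· ≤ ·) (τ ++ ρ)),
              g (u + g (v + w)))) := fun h => hCR ⟨hc3, h⟩
        have hz : psym S I g (σ, u) (List.insertionSort (· ≤ ·) (τ ++ ρ), g (v + w)) = 0 := by
          unfold psym
          rw [if_neg hc4]
        have hps3 : psym S I g (τ, v) (ρ, w)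
            = Finsupp.single (List.insertionSort (· ≤ ·) (τ ++ ρ), g (v + w))
                ((((-1 : k) ^ invCount τ ρ *
                  ((S.chi (zc v) (zc (listMon ρ)) : kˣ) : k) *
                  ((S.C (zc (listMon τ)) (zc (listMon ρ)) : kˣ) : k) *
                  ((S.C (zc v) (zc w) : kˣ) : k) *
                  ((S.C (zc (listMon τ)) (zc (g (v + w)) - zc v) : kˣ) : k) *
                  ((S.C (zc (listMon ρ)) (zc (g (v + w)) - zc w) : kˣ) : k))) •
                  S.mon (v + w - g (v + w))) := by
          unfold psym
          rw [if_pos hc3, Finsupp.smul_single]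
        rw [hps3, lmul_single_one, hz, zero_rmul]
      · have hz : psym S I g (τ, v) (ρ, w) = 0 := by
          unfold psym
          rw [if_neg hc3]
        rw [hz, lmul_zero_right]
    rw [hlhs, hrhs]

end Assembly



section Statements

open Finsupp

variable {k R : Type*} [CommRing k] [Ring R] [Algebra k R] {n : ℕ}

theorem stmt17 [IsNoetherianRing k]
    (S : SkewPoly k R n) (I : Submodule Rᵐᵒᵖ R)
    (hmono : S.IsMonomialIdeal I) (hstab : S.IsStable I)
    (g : NExp n → NExp n) (hg : S.IsDecompFun I g) :
    ∀ s t p : EKSym n, Adm S I s → Adm S I t → Adm S I p →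
      lmul S I g (lmul S I g (Finsupp.single s 1) (Finsupp.single t 1))
          (Finsupp.single p 1)
        = lmul S I g (Finsupp.single s 1)
            (lmul S I g (Finsupp.single t 1) (Finsupp.single p 1)) :=
  assoc_main S I g hg

end Statements
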